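/- Let α_1, β_1, α_2, β_2 > 0, let g(α_1,β_1,α_2,β_2) = ∫_0^1 f(x;α_1,β_1) I_x(α_2,β_2) dx and h(α_1,β_1,α_2,β_2) = B(α_1+α_2, β_1+β_2)/(B(α_1,β_1) B(α_2,β_2)). Then g(α_1, β_1, α_2, β_2+1) = g(α_1,β_1,α_2,β_2) + h(α_1,β_1,α_2,β_2)/β_2. -/

import Mathlib

open MeasureTheory Real Set

/-- The Beta function `B(a,b) = ∫₀¹ t^(a-1) (1-t)^(b-1) dt`. -/
noncomputable def betaFn (a b : ℝ) : ℝ :=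
  ∫ t in (0:ℝ)..1, t ^ (a - 1) * (1 - t) ^ (b - 1)

/-- The Beta(a,b) probability density on `[0,1]`. -/
noncomputable def betaPdf (a b : ℝ) (x : ℝ) : ℝ :=
  x ^ (a - 1) * (1 - x) ^ (b - 1) / betaFn a b

/-- The cumulative distribution function of Beta(a,b). -/
noncomputable def betaCdf (a b : ℝ) (x : ℝ) : ℝ :=
  (∫ t in (0:ℝ)..x, t ^ (a - 1) * (1 - t) ^ (b - 1)) / betaFn a b

/-- `g(α₁,β₁,α₂,β₂)`: the probability that an independent Beta(α₁,β₁) sample exceeds an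
independent Beta(α₂,β₂) sample. -/
noncomputable def probG (a₁ b₁ a₂ b₂ : ℝ) : ℝ :=
  ∫ x in (0:ℝ)..1, betaPdf a₁ b₁ x * betaCdf a₂ b₂ x

/-- `h(α₁,β₁,α₂,β₂) = B(α₁+α₂,β₁+β₂)/(B(α₁,β₁) B(α₂,β₂))`. -/
noncomputable def probH (a₁ b₁ a₂ b₂ : ℝ) : ℝ :=
  betaFn (a₁ + a₂) (b₁ + b₂) / (betaFn a₁ b₁ * betaFn a₂ b₂)

lemma continuous_rpow_base {a : ℝ} (ha : 0 < a) : Continuous (fun t : ℝ => t ^ a) :=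
  continuous_iff_continuousAt.mpr fun t => Real.continuousAt_rpow_const t a (Or.inr ha.le)

lemma continuous_one_sub_rpow {b : ℝ} (hb : 0 < b) : Continuous (fun t : ℝ => (1 - t) ^ b) :=
  (continuous_rpow_base hb).comp (continuous_const.sub continuous_id)

lemma betaIntegrand_integrable {a b : ℝ} (ha : 0 < a) (hb : 0 < b) :
    IntervalIntegrable (fun t : ℝ => t ^ (a - 1) * (1 - t) ^ (b - 1)) volume 0 1 := by
  have h1 : IntervalIntegrable (fun t : ℝ => t ^ (a - 1)) volume 0 (1/2) :=
    intervalIntegral.intervalIntegrable_rpow' (by linarith)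
  have c1 : ContinuousOn (fun t : ℝ => (1 - t) ^ (b - 1)) (Set.uIcc 0 (1/2)) := by
    intro t ht
    rw [Set.uIcc_of_le (by norm_num)] at ht
    exact ((Real.continuousAt_rpow_const (1 - t) (b - 1)
      (Or.inl (by simp only [Set.mem_Icc] at ht; intro h; nlinarith))).comp
      ((continuous_const.sub continuous_id).continuousAt)).continuousWithinAt
  have half1 : IntervalIntegrable (fun t : ℝ => t ^ (a - 1) * (1 - t) ^ (b - 1)) volume 0 (1/2) :=
    h1.mul_continuousOn c1
  have h2 : IntervalIntegrable (fun t : ℝ => (1 - t) ^ (b - 1)) volume (1/2) 1 := by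
    have := (intervalIntegral.intervalIntegrable_rpow' (a := 0) (b := 1/2)
      (r := b - 1) (by linarith)).comp_sub_left 1
    norm_num at this
    exact this.symm
  have c2 : ContinuousOn (fun t : ℝ => t ^ (a - 1)) (Set.uIcc (1/2) 1) := by
    intro t ht
    rw [Set.uIcc_of_le (by norm_num)] at ht
    exact (Real.continuousAt_rpow_const t (a - 1)
      (Or.inl (by simp only [Set.mem_Icc] at ht; intro h; nlinarith))).continuousWithinAt
  have half2 : IntervalIntegrable (fun t : ℝ => t ^ (a - 1) * (1 - t) ^ (b - 1)) volume (1/2) 1 := by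
    have := h2.mul_continuousOn c2
    simpa [mul_comm] using this
  exact half1.trans half2

lemma betaIntegrand_integrable' {a b x : ℝ} (ha : 0 < a) (hb : 0 < b)
    (hx0 : 0 ≤ x) (hx1 : x ≤ 1) :
    IntervalIntegrable (fun t : ℝ => t ^ (a - 1) * (1 - t) ^ (b - 1)) volume 0 x :=
  (betaIntegrand_integrable ha hb).mono_set
    (by rw [Set.uIcc_of_le hx0, Set.uIcc_of_le (by norm_num : (0:ℝ) ≤ 1)];
        exact Set.Icc_subset_Icc le_rfl hx1)

lemma betaFn_pos {a b : ℝ} (ha : 0 < a) (hb : 0 < b) : 0 < betaFn a b := by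
  apply intervalIntegral.intervalIntegral_pos_of_pos_on (betaIntegrand_integrable ha hb)
  · intro t ht
    exact mul_pos (Real.rpow_pos_of_pos ht.1 _) (Real.rpow_pos_of_pos (by linarith [ht.2]) _)
  · norm_num

/-- Key FTC identity. -/
lemma key {a b : ℝ} (ha : 0 < a) (hb : 0 < b) {x : ℝ} (hx0 : 0 ≤ x) (hx1 : x ≤ 1) :
    (a + b) * ∫ t in (0:ℝ)..x, t ^ (a - 1) * (1 - t) ^ b
      = x ^ a * (1 - x) ^ b + b * ∫ t in (0:ℝ)..x, t ^ (a - 1) * (1 - t) ^ (b - 1) := by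
  set f' : ℝ → ℝ := fun t =>
    (a + b) * (t ^ (a - 1) * (1 - t) ^ b) - b * (t ^ (a - 1) * (1 - t) ^ (b - 1)) with hf'
  have hint1 : IntervalIntegrable (fun t : ℝ => t ^ (a - 1) * (1 - t) ^ b) volume 0 x := by
    have := betaIntegrand_integrable' (b := b + 1) ha (by linarith) hx0 hx1
    simpa using this
  have hint2 : IntervalIntegrable (fun t : ℝ => t ^ (a - 1) * (1 - t) ^ (b - 1)) volume 0 x :=
    betaIntegrand_integrable' ha hb hx0 hx1
  have hintf' : IntervalIntegrable f' volume 0 x :=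
    (hint1.const_mul _).sub (hint2.const_mul _)
  have hderiv : ∀ t ∈ Set.Ioo 0 x,
      HasDerivWithinAt (fun t : ℝ => t ^ a * (1 - t) ^ b) (f' t) (Set.Ioi t) t := by
    intro t ht
    have ht0 : 0 < t := ht.1
    have ht1 : t < 1 := lt_of_lt_of_le ht.2 hx1
    have d1 : HasDerivAt (fun t : ℝ => t ^ a) (a * t ^ (a - 1)) t :=
      Real.hasDerivAt_rpow_const (Or.inl ht0.ne')
    have d2 : HasDerivAt (fun t : ℝ => (1 - t) ^ b) (-(b * (1 - t) ^ (b - 1))) t := by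
      have h := (Real.hasDerivAt_rpow_const (x := 1 - t) (p := b)
        (Or.inl (by intro h; linarith [sub_eq_zero.mp h]))).comp t
        ((hasDerivAt_id t).const_sub 1)
      simpa [mul_comm, Function.comp_def] using h
    have := d1.mul d2
    apply HasDerivAt.hasDerivWithinAt
    refine this.congr_deriv ?_
    have e1 : t ^ a = t ^ (a - 1) * t := by
      rw [← Real.rpow_add_one ht0.ne' (a - 1)]; ring_nf
    have e2 : (1 - t) ^ b = (1 - t) ^ (b - 1) * (1 - t) := by
      rw [← Real.rpow_add_one (by intro h; linarith [sub_eq_zero.mp h] : (1:ℝ) - t ≠ 0) (b - 1)]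
      ring_nf
    rw [hf']
    simp only [e1, e2]
    ring
  have hcont : ContinuousOn (fun t : ℝ => t ^ a * (1 - t) ^ b) (Set.Icc 0 x) :=
    ((continuous_rpow_base ha).mul (continuous_one_sub_rpow hb)).continuousOn
  have hftc := intervalIntegral.integral_eq_sub_of_hasDeriv_right_of_le hx0 hcont hderiv hintf'
  rw [hf'] at hftc
  rw [intervalIntegral.integral_sub (hint1.const_mul _) (hint2.const_mul _),
    intervalIntegral.integral_const_mul, intervalIntegral.integral_const_mul] at hftc
  rw [Real.zero_rpow ha.ne'] at hftc
  linarith [hftc]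

lemma betaFn_succ {a b : ℝ} (ha : 0 < a) (hb : 0 < b) :
    (a + b) * betaFn a (b + 1) = b * betaFn a b := by
  have h := key ha hb zero_le_one (le_refl (1:ℝ))
  rw [Real.one_rpow, sub_self, Real.zero_rpow hb.ne'] at h
  unfold betaFn
  rw [show b + 1 - 1 = b by ring]
  linarith [h]

lemma betaCdf_succ {a b : ℝ} (ha : 0 < a) (hb : 0 < b) {x : ℝ} (hx0 : 0 ≤ x) (hx1 : x ≤ 1) :
    betaCdf a (b + 1) x = betaCdf a b x + x ^ a * (1 - x) ^ b / (b * betaFn a b) := by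
  have hab : (0:ℝ) < a + b := by linarith
  have hB : 0 < betaFn a b := betaFn_pos ha hb
  have hB' : 0 < betaFn a (b + 1) := betaFn_pos ha (by linarith)
  have hkey := key ha hb hx0 hx1
  have hrec := betaFn_succ ha hb
  unfold betaCdf
  rw [show b + 1 - 1 = b by ring]
  have hBval : betaFn a (b + 1) = b * betaFn a b / (a + b) := by
    field_simp; linarith [hrec]
  rw [hBval]
  have hGval : (∫ t in (0:ℝ)..x, t ^ (a - 1) * (1 - t) ^ b)
      = (x ^ a * (1 - x) ^ b + b * ∫ t in (0:ℝ)..x, t ^ (a - 1) * (1 - t) ^ (b - 1)) / (a + b) := by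
    field_simp; linarith [hkey]
  rw [hGval]
  field_simp
  ring

/-- Recurrence: incrementing β₂ by one. -/
theorem probG_beta2_succ (a₁ b₁ a₂ b₂ : ℝ)
    (hα₁ : 0 < a₁) (hβ₁ : 0 < b₁) (hα₂ : 0 < a₂) (hβ₂ : 0 < b₂) :
    probG a₁ b₁ a₂ (b₂ + 1) = probG a₁ b₁ a₂ b₂ + probH a₁ b₁ a₂ b₂ / b₂ := by
  have hB1 := betaFn_pos hα₁ hβ₁
  have hB2 := betaFn_pos hα₂ hβ₂
  set C : ℝ := 1 / (betaFn a₁ b₁ * (b₂ * betaFn a₂ b₂)) with hC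
  -- Step 1: pointwise rewriting of the integrand on [0,1]
  have hcongr : probG a₁ b₁ a₂ (b₂ + 1)
      = ∫ x in (0:ℝ)..1, (betaPdf a₁ b₁ x * betaCdf a₂ b₂ x
          + (x ^ (a₁ - 1) * (1 - x) ^ (b₁ - 1)) * (x ^ a₂ * (1 - x) ^ b₂) * C) := by
    unfold probG
    apply intervalIntegral.integral_congr
    intro x hx
    rw [Set.uIcc_of_le zero_le_one] at hx
    beta_reduce
    rw [betaCdf_succ hα₂ hβ₂ hx.1 hx.2, mul_add]
    unfold betaPdf
    rw [hC]
    field_simp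
  -- integrability of the two summands
  have hpdf : IntervalIntegrable (fun x : ℝ =>
      x ^ (a₁ - 1) * (1 - x) ^ (b₁ - 1) / betaFn a₁ b₁) volume 0 1 :=
    (betaIntegrand_integrable hα₁ hβ₁).div_const _
  have hcdfcont : ContinuousOn (betaCdf a₂ b₂) (Set.uIcc 0 1) := by
    unfold betaCdf
    exact (intervalIntegral.continuousOn_primitive_interval
      ((intervalIntegrable_iff' (h := by finiteness)).mp (betaIntegrand_integrable hα₂ hβ₂))).div_const _
  have hi1 : IntervalIntegrable (fun x => betaPdf a₁ b₁ x * betaCdf a₂ b₂ x) volume 0 1 :=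
    hpdf.mul_continuousOn hcdfcont
  have hqcont : Continuous (fun x : ℝ => x ^ a₂ * (1 - x) ^ b₂ * C) :=
    ((continuous_rpow_base hα₂).mul (continuous_one_sub_rpow hβ₂)).mul continuous_const
  have hi2 : IntervalIntegrable (fun x : ℝ =>
      (x ^ (a₁ - 1) * (1 - x) ^ (b₁ - 1)) * (x ^ a₂ * (1 - x) ^ b₂) * C) volume 0 1 := by
    have := (betaIntegrand_integrable hα₁ hβ₁).mul_continuousOn hqcont.continuousOn
    simpa [mul_assoc] using this
  rw [hcongr, intervalIntegral.integral_add hi1 hi2]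
  have hsecond : (∫ x in (0:ℝ)..1,
      (x ^ (a₁ - 1) * (1 - x) ^ (b₁ - 1)) * (x ^ a₂ * (1 - x) ^ b₂) * C)
      = betaFn (a₁ + a₂) (b₁ + b₂) * C := by
    have hae : (∫ x in (0:ℝ)..1,
        (x ^ (a₁ - 1) * (1 - x) ^ (b₁ - 1)) * (x ^ a₂ * (1 - x) ^ b₂) * C)
        = ∫ x in (0:ℝ)..1, (x ^ (a₁ + a₂ - 1) * (1 - x) ^ (b₁ + b₂ - 1)) * C := by
      apply intervalIntegral.integral_congr_ae
      have h1 : ∀ᵐ x : ℝ, x ≠ 1 := by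
        have : (volume : Measure ℝ) {(1:ℝ)} = 0 := measure_singleton 1
        filter_upwards [measure_eq_zero_iff_ae_notMem.mp this] with x hx using hx
      filter_upwards [h1] with x hx1 hx
      rw [Set.uIoc_of_le zero_le_one] at hx
      have hx0 : 0 < x := hx.1
      have hxlt : x < 1 := lt_of_le_of_ne hx.2 hx1
      have e1 : x ^ (a₁ - 1) * x ^ a₂ = x ^ (a₁ + a₂ - 1) := by
        rw [← Real.rpow_add hx0]; ring_nf
      have e2 : (1 - x) ^ (b₁ - 1) * (1 - x) ^ b₂ = (1 - x) ^ (b₁ + b₂ - 1) := by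
        rw [← Real.rpow_add (by linarith)]; ring_nf
      calc (x ^ (a₁ - 1) * (1 - x) ^ (b₁ - 1)) * (x ^ a₂ * (1 - x) ^ b₂) * C
          = (x ^ (a₁ - 1) * x ^ a₂) * ((1 - x) ^ (b₁ - 1) * (1 - x) ^ b₂) * C := by ring
        _ = (x ^ (a₁ + a₂ - 1) * (1 - x) ^ (b₁ + b₂ - 1)) * C := by rw [e1, e2]
    rw [hae, intervalIntegral.integral_mul_const]
    rfl
  rw [hsecond]
  have : betaFn (a₁ + a₂) (b₁ + b₂) * C = probH a₁ b₁ a₂ b₂ / b₂ := by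
    unfold probH
    rw [hC]
    ring
  rw [this]
  rfl
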